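/- arXiv:1601.03240 — 3 statements merged into one kernel-verified Lean document; each statement's English description precedes it below -/
import Mathlib

section
/- Let φ(V) be a free prenex pp-formula and let φ̂(V) be obtained from φ by deleting all atoms occurring in components without liberal variables. Then for every finite structure B, either φ(B) = ∅ or φ(B) = φ̂(B). -/
structure Signature where
  symb : Type
  ar : symb → ℕ

structure Struc (σ : Signature) where
  carrier : Type
  rel : ∀ r : σ.symb, (Fin (σ.ar r) → carrier) → Prop

def IsHom {σ : Signature} (A B : Struc σ) (h : A.carrier → B.carrier) : Prop :=
  ∀ r t, A.rel r t → B.rel r (h ∘ t)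

def ppSet {σ : Signature} (A : Struc σ) (S : Set A.carrier) (B : Struc σ) :
    Set (S → B.carrier) :=
  {f | ∃ h : A.carrier → B.carrier, IsHom A B h ∧ ∀ s : S, h s = f s}

noncomputable def ppCount {σ : Signature} (A : Struc σ) (S : Set A.carrier)
    (B : Struc σ) : ℕ :=
  Nat.card (ppSet A S B)

def CountEquiv {σ : Signature} (A₁ : Struc σ) (S₁ : Set A₁.carrier)
    (A₂ : Struc σ) (S₂ : Set A₂.carrier) : Prop :=
  ∀ B : Struc σ, Finite B.carrier → ppCount A₁ S₁ B = ppCount A₂ S₂ B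

def SemiCountEquiv {σ : Signature} (A₁ : Struc σ) (S₁ : Set A₁.carrier)
    (A₂ : Struc σ) (S₂ : Set A₂.carrier) : Prop :=
  ∀ B : Struc σ, Finite B.carrier → 0 < ppCount A₁ S₁ B → 0 < ppCount A₂ S₂ B →
    ppCount A₁ S₁ B = ppCount A₂ S₂ B

def ppGraph {σ : Signature} (A : Struc σ) : SimpleGraph A.carrier where
  Adj x y := x ≠ y ∧ ∃ r t, A.rel r t ∧ (∃ i, t i = x) ∧ (∃ j, t j = y)
  symm := by
    constructor
    rintro x y ⟨hxy, r, t, h, hi, hj⟩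
    exact ⟨Ne.symm hxy, r, t, h, hj, hi⟩
  loopless := by constructor; rintro x ⟨h, -⟩; exact h rfl

def hatStruc {σ : Signature} (A : Struc σ) (S : Set A.carrier) : Struc σ :=
  ⟨A.carrier, fun r t => A.rel r t ∧ ∃ i, ∃ s ∈ S, (ppGraph A).Reachable (t i) s⟩

def compStruc {σ : Signature} (A : Struc σ) (c : (ppGraph A).ConnectedComponent) :
    Struc σ :=
  ⟨{a : A.carrier // (ppGraph A).connectedComponentMk a = c},
   fun r t => A.rel r (fun i => (t i).1)⟩

def prodStruc {σ : Signature} (B C : Struc σ) : Struc σ :=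
  ⟨B.carrier × C.carrier,
   fun r t => B.rel r (fun i => (t i).1) ∧ C.rel r (fun i => (t i).2)⟩

/-- For a free prenex pp-formula `φ = (A, S)` and `φ̂` obtained by deleting the
non-liberal components, on every finite structure `B` either `φ(B)` is empty
or `φ(B) = φ̂(B)`. -/
theorem stmt10 (σ : Signature) (A : Struc σ) (S : Set A.carrier)
    [Finite A.carrier] (hfree : S.Nonempty)
    (B : Struc σ) [Finite B.carrier] :
    ppSet A S B = ∅ ∨ ppSet A S B = ppSet (hatStruc A S) S B := by
  classical
  rcases eq_or_ne (ppSet A S B) ∅ with hemp | hne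
  · exact Or.inl hemp
  right
  obtain ⟨f0, hf0⟩ := Set.nonempty_iff_ne_empty.mpr hne
  obtain ⟨g, hg, -⟩ : ∃ h : A.carrier → B.carrier, IsHom A B h ∧ ∀ s : S, h s = f0 s := hf0
  ext f
  constructor
  · rintro ⟨k, hk, hks⟩
    exact ⟨k, fun r t ht => hk r t ht.1, hks⟩
  · rintro ⟨k, hk, hks⟩
    refine ⟨fun a => if ∃ s ∈ S, (ppGraph A).Reachable a s then k a else g a, ?_, ?_⟩
    · intro r t ht
      by_cases hc : ∃ i, ∃ s ∈ S, (ppGraph A).Reachable (t i) s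
      · have key : ∀ j, ∃ s ∈ S, (ppGraph A).Reachable (t j) s := by
          obtain ⟨i, s, hsS, hr⟩ := hc
          intro j
          refine ⟨s, hsS, ?_⟩
          rcases eq_or_ne (t j) (t i) with he | he
          · rw [he]; exact hr
          · have hadj : (ppGraph A).Adj (t j) (t i) :=
              ⟨he, r, t, ht, ⟨j, rfl⟩, ⟨i, rfl⟩⟩
            exact hadj.reachable.trans hr
        have heq : ((fun a =>
            if ∃ s ∈ S, (ppGraph A).Reachable a s then k a else g a) ∘ t) = k ∘ t :=
          funext fun j => if_pos (key j)
        rw [heq]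
        exact hk r t ⟨ht, hc⟩
      · push_neg at hc
        have heq : ((fun a =>
            if ∃ s ∈ S, (ppGraph A).Reachable a s then k a else g a) ∘ t) = g ∘ t :=
          funext fun j => if_neg (by push_neg; exact fun s hs => hc j s hs)
        rw [heq]
        exact hg r t ht
    · intro s
      simp only
      rw [if_pos ⟨s.1, s.2, SimpleGraph.Reachable.refl _⟩]
      exact hks s
end

section
/- Semi-counting equivalence is an equivalence relation on free prenex pp-formulas over a fixed signature. -/
structure PPForm (σ : Signature) where
  A : Struc σ
  S : Set A.carrier
  fin : Finite A.carrier
  free : S.Nonempty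

-- auxiliary
def ptStruc (σ : Signature) : Struc σ := ⟨PUnit, fun _ _ => True⟩

def sumStruc {σ : Signature} (B C : Struc σ) : Struc σ :=
  ⟨B.carrier ⊕ C.carrier, fun r t =>
    (∃ tb, t = Sum.inl ∘ tb ∧ B.rel r tb) ∨ (∃ tc, t = Sum.inr ∘ tc ∧ C.rel r tc)⟩

def powStruc {σ : Signature} (B : Struc σ) : ℕ → Struc σ
  | 0 => ptStruc σ
  | n+1 => prodStruc B (powStruc B n)

theorem powStruc_finite {σ : Signature} (B : Struc σ) [Finite B.carrier] (n : ℕ) :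
    Finite (powStruc B n).carrier := by
  induction n with
  | zero => simp only [powStruc]; exact inferInstanceAs (Finite PUnit.{1})
  | succ n ih =>
    simp only [powStruc]
    haveI := ih
    exact inferInstanceAs (Finite (B.carrier × (powStruc B n).carrier))

theorem ppCount_prod {σ : Signature} (A : Struc σ) (S : Set A.carrier) (B C : Struc σ) :
    ppCount A S (prodStruc B C) = ppCount A S B * ppCount A S C := by
  rw [ppCount, ppCount, ppCount, ← Nat.card_prod]
  refine Nat.card_congr ⟨fun f => (⟨fun s => (f.1 s).1, ?_⟩, ⟨fun s => (f.1 s).2, ?_⟩),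
    fun p => ⟨fun s => (p.1.1 s, p.2.1 s), ?_⟩, fun f => rfl, fun p => rfl⟩
  · obtain ⟨h, hh, hs⟩ := f.2
    exact ⟨fun a => (h a).1, fun r t ht => (hh r t ht).1, fun s => by show (h ↑s).1 = _; rw [hs]⟩
  · obtain ⟨h, hh, hs⟩ := f.2
    exact ⟨fun a => (h a).2, fun r t ht => (hh r t ht).2, fun s => by show (h ↑s).2 = _; rw [hs]⟩
  · obtain ⟨h₁, hh₁, hs₁⟩ := p.1.2
    obtain ⟨h₂, hh₂, hs₂⟩ := p.2.2
    exact ⟨fun a => (h₁ a, h₂ a), fun r t ht => ⟨hh₁ r t ht, hh₂ r t ht⟩,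
      fun s => by show ((h₁ s, h₂ s) : B.carrier × C.carrier) = (p.1.1 s, p.2.1 s); rw [Prod.mk.injEq]; exact ⟨hs₁ s, hs₂ s⟩⟩

theorem ppCount_pt {σ : Signature} (A : Struc σ) (S : Set A.carrier) :
    ppCount A S (ptStruc σ) = 1 := by
  rw [ppCount, Nat.card_eq_one_iff_unique]
  constructor
  · haveI : Subsingleton (ptStruc σ).carrier := inferInstanceAs (Subsingleton PUnit)
    exact ⟨fun f g => Subtype.ext (funext fun s => Subsingleton.elim _ _)⟩
  · exact ⟨⟨fun _ => PUnit.unit, ⟨fun _ => PUnit.unit, fun r t ht => trivial, fun s => rfl⟩⟩⟩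

theorem ppCount_pow {σ : Signature} (A : Struc σ) (S : Set A.carrier) (B : Struc σ) (n : ℕ) :
    ppCount A S (powStruc B n) = ppCount A S B ^ n := by
  induction n with
  | zero => rw [pow_zero]; exact ppCount_pt A S
  | succ n ih => rw [powStruc, ppCount_prod, ih, pow_succ, mul_comm]

theorem ppCount_le_of_injhom {σ : Signature} (A : Struc σ) (S : Set A.carrier)
    (B C : Struc σ) [Finite A.carrier] [Finite C.carrier]
    (g : B.carrier → C.carrier) (hg : IsHom B C g) (hinj : Function.Injective g) :
    ppCount A S B ≤ ppCount A S C := by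
  refine Nat.card_le_card_of_injective
    (fun f => ⟨fun s => g (f.1 s), ?_⟩) ?_
  · obtain ⟨h, hh, hs⟩ := f.2
    exact ⟨fun a => g (h a), fun r t ht => hg r (h ∘ t) (hh r t ht),
      fun s => by show g (h ↑s) = _; rw [hs]⟩
  · intro f f' hff
    apply Subtype.ext; funext s
    have := congrFun (congrArg Subtype.val hff) s
    exact hinj this

theorem ppCount_sum_pt_pos {σ : Signature} (A : Struc σ) (S : Set A.carrier)
    (D : Struc σ) [Finite A.carrier] [Finite D.carrier] :
    0 < ppCount A S (sumStruc D (ptStruc σ)) := by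
  rw [ppCount, Nat.card_pos_iff]
  constructor
  · exact ⟨⟨fun _ => Sum.inr PUnit.unit, ⟨fun _ => Sum.inr PUnit.unit,
      fun r t ht => Or.inr ⟨fun _ => PUnit.unit, rfl, trivial⟩, fun s => rfl⟩⟩⟩
  · haveI : Finite (sumStruc D (ptStruc σ)).carrier :=
      inferInstanceAs (Finite (D.carrier ⊕ PUnit.{1}))
    infer_instance

theorem ppCount_le_sum_pt {σ : Signature} (A : Struc σ) (S : Set A.carrier)
    (D : Struc σ) [Finite A.carrier] [Finite D.carrier] :
    ppCount A S D ≤ ppCount A S (sumStruc D (ptStruc σ)) := by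
  haveI : Finite (sumStruc D (ptStruc σ)).carrier :=
    inferInstanceAs (Finite (D.carrier ⊕ PUnit.{1}))
  exact ppCount_le_of_injhom A S D _ Sum.inl
    (fun r t ht => Or.inl ⟨t, rfl, ht⟩) Sum.inl_injective

/-- Collapse a hom into `D ⊔ pt` to a map into `D`, patching the pt-part by `h₀`. -/
def collapse {σ : Signature} {A D : Struc σ} (h₀ : A.carrier → D.carrier)
    (h : A.carrier → (D.carrier ⊕ PUnit.{1})) : A.carrier → D.carrier :=
  fun a => Sum.elim id (fun _ => h₀ a) (h a)

theorem ppCount_sum_pt_le {σ : Signature} (A : Struc σ) (S : Set A.carrier)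
    (D : Struc σ) [Finite A.carrier] [Finite D.carrier]
    (h₀ : A.carrier → D.carrier) (hh₀ : IsHom A D h₀) :
    ppCount A S (sumStruc D (ptStruc σ)) ≤ Nat.card (Set ↥S) * ppCount A S D := by
  rw [ppCount, ppCount, ← Nat.card_prod]
  have mem : ∀ f : ppSet A S (sumStruc D (ptStruc σ)),
      (fun s : ↥S => collapse h₀ f.2.choose s) ∈ ppSet A S D := by
    intro f
    obtain ⟨hh, hs⟩ := f.2.choose_spec
    refine ⟨collapse h₀ f.2.choose, ?_, fun s => rfl⟩
    intro r t ht
    rcases hh r t ht with ⟨tb, he, hrel⟩ | ⟨tc, he, -⟩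
    · have : collapse h₀ f.2.choose ∘ t = tb := by
        funext i
        have hi := congrFun he i
        simp only [Function.comp_apply] at hi
        show Sum.elim id (fun _ => h₀ (t i)) (f.2.choose (t i)) = tb i
        rw [hi]; rfl
      rw [this]; exact hrel
    · have : collapse h₀ f.2.choose ∘ t = h₀ ∘ t := by
        funext i
        have hi := congrFun he i
        simp only [Function.comp_apply] at hi
        show Sum.elim id (fun _ => h₀ (t i)) (f.2.choose (t i)) = h₀ (t i)
        rw [hi]; rfl
      rw [this]; exact hh₀ r t ht
  refine Nat.card_le_card_of_injective
    (fun f => (⟨{s : ↥S | f.1 s = Sum.inr PUnit.unit},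
      ⟨fun s => collapse h₀ f.2.choose s, mem f⟩⟩ :
        Set ↥S × ppSet A S D)) ?_
  intro f f' hff
  have hT := congrArg Prod.fst hff
  have hgv := congrFun (congrArg (fun p => (Prod.snd p).1) hff)
  simp only at hT hgv
  apply Subtype.ext; funext s
  have hsf : f.2.choose ↑s = f.1 s := f.2.choose_spec.2 s
  have hsf' : f'.2.choose ↑s = f'.1 s := f'.2.choose_spec.2 s
  have hTs : (f.1 s = Sum.inr PUnit.unit) ↔ (f'.1 s = Sum.inr PUnit.unit) := by
    constructor
    · intro h; exact (Set.ext_iff.mp hT s).mp h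
    · intro h; exact (Set.ext_iff.mp hT s).mpr h
  cases hc : f.1 s with
  | inr u =>
    cases u
    rw [(hTs.mp hc)]; rfl
  | inl b =>
    cases hc' : f'.1 s with
    | inr u' =>
      cases u'
      rw [hTs.mpr hc'] at hc
      exact absurd hc (by simp)
    | inl b' =>
      have h1 : collapse h₀ f.2.choose ↑s = b := by
        simp [collapse, hsf, hc]; rfl
      have h2 : collapse h₀ f'.2.choose ↑s = b' := by
        simp [collapse, hsf', hc']; rfl
      have := hgv s
      rw [h1, h2] at this
      rw [this]

theorem binom_aux (w n : ℕ) : w ^ (n+1) + (n+1) * w ^ n ≤ (w+1) ^ (n+1) := by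
  induction n with
  | zero => simp
  | succ n ih =>
    calc w ^ (n+2) + (n+2) * w ^ (n+1)
        ≤ (w+1) * (w ^ (n+1) + (n+1) * w ^ n) := by
          have expand : (w+1) * (w ^ (n+1) + (n+1) * w ^ n)
              = w ^ (n+2) + (n+2) * w ^ (n+1) + (n+1) * w ^ n := by ring
          rw [expand]; exact Nat.le_add_right _ _
      _ ≤ (w+1) * (w+1) ^ (n+1) := Nat.mul_le_mul_left _ ih
      _ = (w+1) ^ (n+2) := by ring

theorem le_of_forall_pow_le (u w C : ℕ) (hw : 0 < w) (h : ∀ n, u ^ n ≤ C * w ^ n) :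
    u ≤ w := by
  by_contra hc
  push_neg at hc
  set n := C * w with hn
  have h1 : w ^ (n+1) + (n+1) * w ^ n ≤ (w+1) ^ (n+1) := binom_aux w n
  have h2 : (w+1) ^ (n+1) ≤ u ^ (n+1) := Nat.pow_le_pow_left hc (n+1)
  have h3 := h (n+1)
  have h4 : (n+1) * w ^ n = C * w ^ (n+1) + w ^ n := by rw [hn, pow_succ]; ring
  have h5 : 0 < w ^ n := pow_pos hw n
  rw [h4] at h1
  have h6 : w ^ (n+1) + (C * w ^ (n+1) + w ^ n) ≤ C * w ^ (n+1) :=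
    le_trans h1 (le_trans h2 h3)
  have h7 : C * w ^ (n+1) < w ^ (n+1) + (C * w ^ (n+1) + w ^ n) :=
    lt_of_lt_of_le (Nat.lt_add_of_pos_right h5) (Nat.le_add_left _ _)
  exact absurd h6 (not_le_of_gt h7)

theorem hom_of_ppCount_pos {σ : Signature} {A D : Struc σ} {S : Set A.carrier}
    (h : 0 < ppCount A S D) : ∃ h₀ : A.carrier → D.carrier, IsHom A D h₀ := by
  rw [ppCount, Nat.card_pos_iff] at h
  obtain ⟨⟨⟨f, h₀, hh, -⟩⟩, -⟩ := h
  exact ⟨h₀, hh⟩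

/-- Semi-counting equivalence is an equivalence relation on free prenex
pp-formulas over a fixed signature. -/
theorem stmt12 (σ : Signature) :
    Equivalence (fun φ ψ : PPForm σ => SemiCountEquiv φ.A φ.S ψ.A ψ.S) := by
  constructor
  · intro φ B hB h1 h2; rfl
  · intro φ ψ h B hB h1 h2; exact (h B hB h2 h1).symm
  · intro φ ψ χ h12 h23 B hB h1 h3
    haveI := φ.fin; haveI := ψ.fin; haveI := χ.fin; haveI := hB
    have key : ∀ (X Y : PPForm σ), SemiCountEquiv X.A X.S ψ.A ψ.S →
        SemiCountEquiv Y.A Y.S ψ.A ψ.S →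
        0 < ppCount X.A X.S B → 0 < ppCount Y.A Y.S B →
        ppCount X.A X.S B ≤ ppCount Y.A Y.S B := by
      intro X Y hX hY hpX hpY
      haveI := X.fin; haveI := Y.fin
      refine le_of_forall_pow_le _ _ (Nat.card (Set ↥Y.S)) hpY ?_
      intro n
      haveI : Finite (powStruc B n).carrier := powStruc_finite B n
      set Dn := sumStruc (powStruc B n) (ptStruc σ) with hDn
      haveI : Finite Dn.carrier :=
        inferInstanceAs (Finite ((powStruc B n).carrier ⊕ PUnit.{1}))
      have cX : ppCount X.A X.S (powStruc B n) = ppCount X.A X.S B ^ n :=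
        ppCount_pow X.A X.S B n
      have cY : ppCount Y.A Y.S (powStruc B n) = ppCount Y.A Y.S B ^ n :=
        ppCount_pow Y.A Y.S B n
      have posX : 0 < ppCount X.A X.S Dn :=
        lt_of_lt_of_le (by rw [cX]; exact pow_pos hpX n)
          (ppCount_le_sum_pt X.A X.S (powStruc B n))
      have posY : 0 < ppCount Y.A Y.S Dn :=
        lt_of_lt_of_le (by rw [cY]; exact pow_pos hpY n)
          (ppCount_le_sum_pt Y.A Y.S (powStruc B n))
      have pos2 : 0 < ppCount ψ.A ψ.S Dn := ppCount_sum_pt_pos ψ.A ψ.S (powStruc B n)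
      have eXY : ppCount X.A X.S Dn = ppCount Y.A Y.S Dn := by
        rw [hX Dn ‹_› posX pos2, hY Dn ‹_› posY pos2]
      obtain ⟨h₀, hh₀⟩ := hom_of_ppCount_pos (D := powStruc B n)
        (by rw [cY]; exact pow_pos hpY n)
      have upper : ppCount Y.A Y.S Dn ≤ Nat.card (Set ↥Y.S) * ppCount Y.A Y.S B ^ n := by
        rw [← cY]
        exact ppCount_sum_pt_le Y.A Y.S (powStruc B n) h₀ hh₀
      calc ppCount X.A X.S B ^ n = ppCount X.A X.S (powStruc B n) := cX.symm
        _ ≤ ppCount X.A X.S Dn := ppCount_le_sum_pt X.A X.S (powStruc B n)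
        _ = ppCount Y.A Y.S Dn := eXY
        _ ≤ Nat.card (Set ↥Y.S) * ppCount Y.A Y.S B ^ n := upper
    exact le_antisymm (key φ χ h12 (fun D hD p q => (h23 D hD q p).symm) h1 h3)
      (key χ φ (fun D hD p q => (h23 D hD q p).symm) h12 h3 h1)
end

section
/- Let φ_1, ..., φ_s be free prenex pp-formulas over a common signature that are pairwise counting inequivalent but pairwise semi-counting equivalent, and let A_i be the structure of φ_i. Then the structures A_1, ..., A_s are pairwise not homomorphically equivalent. -/
lemma isHom_comp {σ : Signature} {A B C : Struc σ} {f : A.carrier → B.carrier}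
    {g : B.carrier → C.carrier} (hf : IsHom A B f) (hg : IsHom B C g) :
    IsHom A C (g ∘ f) := fun r t h => hg r (f ∘ t) (hf r t h)

lemma ppSet_nonempty_iff {σ : Signature} (A : Struc σ) (S : Set A.carrier)
    (B : Struc σ) : (ppSet A S B).Nonempty ↔ ∃ h, IsHom A B h := by
  constructor
  · rintro ⟨f, h, hh, -⟩; exact ⟨h, hh⟩
  · rintro ⟨h, hh⟩; exact ⟨fun s => h s, h, hh, fun s => rfl⟩

/-- If free prenex pp-formulas `φ_i = (A_i, S_i)` are pairwise not counting
equivalent but pairwise semi-counting equivalent, then the structures `A_i`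
are pairwise not homomorphically equivalent. -/
theorem stmt19 (σ : Signature) (s : ℕ) (A : Fin s → Struc σ)
    (S : ∀ i, Set (A i).carrier)
    (hfin : ∀ i, Finite (A i).carrier) (hfree : ∀ i, (S i).Nonempty)
    (hnce : ∀ i j, i ≠ j → ¬ CountEquiv (A i) (S i) (A j) (S j))
    (hsce : ∀ i j, SemiCountEquiv (A i) (S i) (A j) (S j)) :
    ∀ i j, i ≠ j →
      ¬ ((∃ h, IsHom (A i) (A j) h) ∧ (∃ h, IsHom (A j) (A i) h)) := by
  intro i j hij hhom
  obtain ⟨⟨h1, hh1⟩, ⟨h2, hh2⟩⟩ := hhom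
  apply hnce i j hij
  intro B hB
  haveI : Finite B.carrier := hB
  haveI := hfin i
  haveI := hfin j
  haveI : Finite (ppSet (A i) (S i) B) := Subtype.finite
  haveI : Finite (ppSet (A j) (S j) B) := Subtype.finite
  by_cases hex : ∃ h, IsHom (A i) B h
  · obtain ⟨g, hg⟩ := hex
    have hi : (ppSet (A i) (S i) B).Nonempty :=
      (ppSet_nonempty_iff _ _ _).2 ⟨g, hg⟩
    have hj : (ppSet (A j) (S j) B).Nonempty :=
      (ppSet_nonempty_iff _ _ _).2 ⟨g ∘ h2, isHom_comp hh2 hg⟩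
    haveI := hi.to_subtype
    haveI := hj.to_subtype
    exact hsce i j B hB Nat.card_pos Nat.card_pos
  · have hi : ppCount (A i) (S i) B = 0 := by
      rw [ppCount, Nat.card_eq_zero]
      left
      rw [← not_nonempty_iff, Set.nonempty_coe_sort, ppSet_nonempty_iff]
      exact hex
    have hj : ppCount (A j) (S j) B = 0 := by
      rw [ppCount, Nat.card_eq_zero]
      left
      rw [← not_nonempty_iff, Set.nonempty_coe_sort, ppSet_nonempty_iff]
      rintro ⟨g, hg⟩
      exact hex ⟨g ∘ h1, isHom_comp hh1 hg⟩
    rw [hi, hj]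
end
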